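/- For any three unit vectors r₁, r₂, r₃ in ℝ³, setting x = (1 + ⟨r₁,r₂⟩ + ⟨r₂,r₃⟩ + ⟨r₁,r₃⟩)/4 and y = det(r₁,r₂,r₃)/4, one has x² + y² ≤ ((2x+1)/3)³. -/

import Mathlib

open Real Matrix

/-- Determinant of the 3×3 matrix with columns `u`, `v`, `w`. -/
noncomputable def det3 (u v w : EuclideanSpace ℝ (Fin 3)) : ℝ :=
  Matrix.det (Matrix.of ![(u : Fin 3 → ℝ), (v : Fin 3 → ℝ), (w : Fin 3 → ℝ)])ᵀ

set_option maxHeartbeats 1000000 in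
theorem stmt_6 (r₁ r₂ r₃ : EuclideanSpace ℝ (Fin 3))
    (h₁ : ‖r₁‖ = 1) (h₂ : ‖r₂‖ = 1) (h₃ : ‖r₃‖ = 1) :
    let x : ℝ := (1 + (inner ℝ r₁ r₂ : ℝ) + (inner ℝ r₂ r₃ : ℝ) + (inner ℝ r₁ r₃ : ℝ)) / 4
    let y : ℝ := det3 r₁ r₂ r₃ / 4
    x ^ 2 + y ^ 2 ≤ ((2 * x + 1) / 3) ^ 3 := by
  intro x y
  set a : ℝ := (inner ℝ r₁ r₂ : ℝ) with ha
  set b : ℝ := (inner ℝ r₂ r₃ : ℝ) with hb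
  set c : ℝ := (inner ℝ r₁ r₃ : ℝ) with hc
  have hu : r₁ 0 ^ 2 + r₁ 1 ^ 2 + r₁ 2 ^ 2 = 1 := by
    have := real_inner_self_eq_norm_sq r₁
    rw [h₁, PiLp.inner_apply] at this
    simpa [PiLp.inner_apply, RCLike.inner_apply, Fin.sum_univ_three, sq] using this
  have hv : r₂ 0 ^ 2 + r₂ 1 ^ 2 + r₂ 2 ^ 2 = 1 := by
    have := real_inner_self_eq_norm_sq r₂
    rw [h₂, PiLp.inner_apply] at this
    simpa [PiLp.inner_apply, RCLike.inner_apply, Fin.sum_univ_three, sq] using this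
  have hw : r₃ 0 ^ 2 + r₃ 1 ^ 2 + r₃ 2 ^ 2 = 1 := by
    have := real_inner_self_eq_norm_sq r₃
    rw [h₃, PiLp.inner_apply] at this
    simpa [PiLp.inner_apply, RCLike.inner_apply, Fin.sum_univ_three, sq] using this
  have ea : a = r₁ 0 * r₂ 0 + r₁ 1 * r₂ 1 + r₁ 2 * r₂ 2 := by
    rw [ha]; simp [PiLp.inner_apply, RCLike.inner_apply, Fin.sum_univ_three]; ring
  have eb : b = r₂ 0 * r₃ 0 + r₂ 1 * r₃ 1 + r₂ 2 * r₃ 2 := by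
    rw [hb]; simp [PiLp.inner_apply, RCLike.inner_apply, Fin.sum_univ_three]; ring
  have ec : c = r₁ 0 * r₃ 0 + r₁ 1 * r₃ 1 + r₁ 2 * r₃ 2 := by
    rw [hc]; simp [PiLp.inner_apply, RCLike.inner_apply, Fin.sum_univ_three]; ring
  have ed : det3 r₁ r₂ r₃ =
      r₁ 0 * (r₂ 1 * r₃ 2 - r₂ 2 * r₃ 1)
      - r₂ 0 * (r₁ 1 * r₃ 2 - r₁ 2 * r₃ 1)
      + r₃ 0 * (r₁ 1 * r₂ 2 - r₁ 2 * r₂ 1) := by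
    rw [det3, Matrix.det_transpose, Matrix.det_fin_three]
    simp [Matrix.cons_val_zero, Matrix.cons_val_one, Matrix.head_cons]
    ring
  have key : det3 r₁ r₂ r₃ ^ 2 = 1 + 2 * a * b * c - a ^ 2 - b ^ 2 - c ^ 2 := by
    rw [ed, ea, eb, ec]
    linear_combination
      ((r₂ 0 ^ 2 + r₂ 1 ^ 2 + r₂ 2 ^ 2) * (r₃ 0 ^ 2 + r₃ 1 ^ 2 + r₃ 2 ^ 2)
        - (r₂ 0 * r₃ 0 + r₂ 1 * r₃ 1 + r₂ 2 * r₃ 2) ^ 2) * hu +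
      ((r₃ 0 ^ 2 + r₃ 1 ^ 2 + r₃ 2 ^ 2)
        - (r₁ 0 * r₃ 0 + r₁ 1 * r₃ 1 + r₁ 2 * r₃ 2) ^ 2) * hv +
      (1 - (r₁ 0 * r₂ 0 + r₁ 1 * r₂ 1 + r₁ 2 * r₂ 2) ^ 2) * hw
  have h1a : |a| ≤ 1 := by
    rw [ha]
    calc |(inner ℝ r₁ r₂ : ℝ)| ≤ ‖r₁‖ * ‖r₂‖ := abs_real_inner_le_norm r₁ r₂
    _ = 1 := by rw [h₁, h₂]; ring
  have h1b : |b| ≤ 1 := by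
    rw [hb]
    calc |(inner ℝ r₂ r₃ : ℝ)| ≤ ‖r₂‖ * ‖r₃‖ := abs_real_inner_le_norm r₂ r₃
    _ = 1 := by rw [h₂, h₃]; ring
  have h1c : |c| ≤ 1 := by
    rw [hc]
    calc |(inner ℝ r₁ r₃ : ℝ)| ≤ ‖r₁‖ * ‖r₃‖ := abs_real_inner_le_norm r₁ r₃
    _ = 1 := by rw [h₁, h₃]; ring
  have ha1 : -1 ≤ a := neg_le_of_abs_le h1a
  have hb1 : -1 ≤ b := neg_le_of_abs_le h1b
  have hc1 : -1 ≤ c := neg_le_of_abs_le h1c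
  have t1 : (a - b) ^ 2 * (a + b + 7 * c + 9) ≥ 0 :=
    mul_nonneg (sq_nonneg _) (by linarith)
  have t2 : (b - c) ^ 2 * (7 * a + b + c + 9) ≥ 0 :=
    mul_nonneg (sq_nonneg _) (by linarith)
  have t3 : (c - a) ^ 2 * (a + 7 * b + c + 9) ≥ 0 :=
    mul_nonneg (sq_nonneg _) (by linarith)
  have hx : x = (1 + a + b + c) / 4 := rfl
  have hy : y = det3 r₁ r₂ r₃ / 4 := rfl
  rw [hx, hy]
  nlinarith [key, t1, t2, t3]
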